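/- Suppose c, p : Fin 3 × Fin 3 → ZMod n with pairwise distinct i, j, k satisfy c j j + p i j = c j k + p j k, c k i + p k i = c k k + p j k, c i i + p k i = c i j + p j j (parts of alignments (19), (22), (16)), together with the separability requirement p j j ≠ p i j. Then c i i + c j j + c k k ≠ c i j + c j k + c k i in ZMod n. -/
import Mathlib

theorem constraint_ix_from_intra_dagger (n : ℕ) (c p : Fin 3 × Fin 3 → ZMod n)
    (i j k : Fin 3) (hij : i ≠ j) (hjk : j ≠ k) (hik : i ≠ k)
    (h19 : c (j, j) + p (i, j) = c (j, k) + p (j, k))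
    (h22 : c (k, i) + p (k, i) = c (k, k) + p (j, k))
    (h16 : c (i, i) + p (k, i) = c (i, j) + p (j, j))
    (hsep : p (j, j) ≠ p (i, j)) :
    c (i, i) + c (j, j) + c (k, k) ≠ c (i, j) + c (j, k) + c (k, i) := by
  intro h
  apply hsep
  linear_combination -h16 + h22 - h19 + h
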